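/- Let T be a coequalizable monad on C whose Eilenberg–Moore forgetful functor G : C^T → C is absolutely monadic. Then for every homological presentation (D, F', G') of T, the comparison functor K : D → C^T is an equivalence of categories; in other words, T is uniquely homologically presentable. -/

import Mathlib

open CategoryTheory CategoryTheory.Limits

namespace AbsMonadicAux

variable {C : Type*} [Category C] {D : Type*} [Category D]
  {F' : C ⥤ D} {G' : D ⥤ C} (adj : F' ⊣ G')

theorem kleisli_ext (adj : F' ⊣ G') {Z : C} {Y : D} {h₁ h₂ : F'.obj Z ⟶ Y}
    (w : G'.map h₁ = G'.map h₂) : h₁ = h₂ :=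
  (Adjunction.homEquiv adj Z Y).injective
    (by rw [Adjunction.homEquiv_unit, Adjunction.homEquiv_unit, w])

/-- lift of an algebra morphism between comparison-images of free objects. -/
noncomputable def lift (adj : F' ⊣ G') {Z Z' : C}
    (h : (Monad.comparison adj).obj (F'.obj Z) ⟶ (Monad.comparison adj).obj (F'.obj Z')) :
    F'.obj Z ⟶ F'.obj Z' :=
  F'.map (adj.unit.app Z ≫ h.f) ≫ adj.counit.app (F'.obj Z')

theorem G'_map_lift (adj : F' ⊣ G') {Z Z' : C}
    (h : (Monad.comparison adj).obj (F'.obj Z) ⟶ (Monad.comparison adj).obj (F'.obj Z')) :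
    G'.map (lift adj h) = h.f := by
  have hh : G'.map (F'.map h.f) ≫ G'.map (adj.counit.app (F'.obj Z'))
      = G'.map (adj.counit.app (F'.obj Z)) ≫ h.f := h.h
  erw [lift, Functor.map_comp, Functor.map_comp, Functor.map_comp, Category.assoc, hh,
    ← Category.assoc, ← Functor.map_comp, adj.left_triangle_components]
  simp
  exact Category.id_comp _

theorem K_map_lift (adj : F' ⊣ G') {Z Z' : C}
    (h : (Monad.comparison adj).obj (F'.obj Z) ⟶ (Monad.comparison adj).obj (F'.obj Z')) :
    (Monad.comparison adj).map (lift adj h) = h :=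
  Monad.Algebra.Hom.ext (G'_map_lift adj h)

end AbsMonadicAux

open AbsMonadicAux

/-- If `T` is a coequalizable monad whose Eilenberg–Moore forgetful functor is absolutely
monadic, then for every homological presentation `(D, F', G')` of `T` the comparison functor
`K : D ⥤ C^T` is an equivalence: `T` is uniquely homologically presentable. -/
theorem uniquely_homologically_presentable_of_absolutely_monadic
    {C : Type*} [Category C] (T : Monad C) [HasCoequalizers T.Algebra]
    -- absolute monadicity of the forgetful functor `G : C^T ⥤ C`:
    (habs : ∀ {A B : T.Algebra} (f g : A ⟶ B),
      (∃ (Z : C) (π : T.forget.obj B ⟶ Z),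
          Nonempty (IsSplitCoequalizer (T.forget.map f) (T.forget.map g) π)) →
        (∃ (W : T.Algebra) (ρ : B ⟶ W), Nonempty (IsSplitCoequalizer f g ρ)) ∧
        Nonempty (PreservesColimit (parallelPair f g) T.forget) ∧
        Nonempty (ReflectsColimit (parallelPair f g) T.forget))
    -- a homological presentation `(D, F', G')` of `T`:
    {D : Type*} [Category D] (F' : C ⥤ D) (G' : D ⥤ C) (adj : F' ⊣ G')
    (hT : adj.toMonad = T)
    (hcoeq : ∀ X : adj.toMonad.Algebra,
      HasCoequalizer (adj.counit.app (F'.obj X.A)) (F'.map X.a))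
    (hiso : ∀ Y : D,
      haveI : HasCoequalizer (adj.counit.app (F'.obj (G'.obj Y)))
          (F'.map (G'.map (adj.counit.app Y))) := hcoeq ((Monad.comparison adj).obj Y)
      IsIso (coequalizer.desc
        (f := adj.counit.app (F'.obj (G'.obj Y)))
        (g := F'.map (G'.map (adj.counit.app Y)))
        (adj.counit.app Y) (by simp))) :
    (Monad.comparison adj).IsEquivalence := by
  subst hT
  -- Fully faithfulness via the homological condition `hiso`.
  have key : ∀ {Y₁ Y₂ : D} (h : (Monad.comparison adj).obj Y₁ ⟶ (Monad.comparison adj).obj Y₂),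
      ∃! h' : Y₁ ⟶ Y₂, G'.map h' = h.f := by
    intro Y₁ Y₂ h
    haveI : HasCoequalizer (adj.counit.app (F'.obj (G'.obj Y₁)))
        (F'.map (G'.map (adj.counit.app Y₁))) := hcoeq ((Monad.comparison adj).obj Y₁)
    set e₁ := adj.counit.app (F'.obj (G'.obj Y₁)) with he₁
    set e₂ := F'.map (G'.map (adj.counit.app Y₁)) with he₂
    have hh : G'.map (F'.map h.f) ≫ G'.map (adj.counit.app Y₂)
        = G'.map (adj.counit.app Y₁) ≫ h.f := h.h
    set m₀ : F'.obj (G'.obj Y₁) ⟶ Y₂ := F'.map h.f ≫ adj.counit.app Y₂ with hm₀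
    have hcond : e₁ ≫ m₀ = e₂ ≫ m₀ := by
      have n1 : e₁ ≫ F'.map h.f
          = F'.map (G'.map (F'.map (X := G'.obj Y₁) (Y := G'.obj Y₂) h.f)) ≫ adj.counit.app (F'.obj (G'.obj Y₂)) :=
        (adj.counit_naturality (F'.map h.f)).symm
      have n2 : adj.counit.app (F'.obj (G'.obj Y₂)) ≫ adj.counit.app Y₂
          = F'.map (G'.map (adj.counit.app Y₂)) ≫ adj.counit.app Y₂ :=
        (adj.counit_naturality (adj.counit.app Y₂)).symm
      calc e₁ ≫ m₀ = (e₁ ≫ F'.map h.f) ≫ adj.counit.app Y₂ := by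
            erw [hm₀, Category.assoc]
        _ = F'.map (G'.map (F'.map (X := G'.obj Y₁) (Y := G'.obj Y₂) h.f))
            ≫ adj.counit.app (F'.obj (G'.obj Y₂)) ≫ adj.counit.app Y₂ := by
            erw [n1, Category.assoc]
            exact rfl
        _ = (F'.map (G'.map (F'.map (X := G'.obj Y₁) (Y := G'.obj Y₂) h.f)) ≫ F'.map (G'.map (adj.counit.app Y₂)))
            ≫ adj.counit.app Y₂ := by rw [n2, Category.assoc]
        _ = F'.map (G'.map (adj.counit.app Y₁) ≫ h.f) ≫ adj.counit.app Y₂ := by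
            rw [← F'.map_comp]
            exact congrArg (fun t => F'.map t ≫ adj.counit.app Y₂) hh
        _ = e₂ ≫ m₀ := by
            rw [he₂, hm₀]
            exact (congrArg (· ≫ adj.counit.app Y₂) (F'.map_comp _ _)).trans (Category.assoc _ _ _)
    set dmap := coequalizer.desc
        (f := adj.counit.app (F'.obj (G'.obj Y₁)))
        (g := F'.map (G'.map (adj.counit.app Y₁)))
        (adj.counit.app Y₁) (by simp) with hdmap
    haveI : IsIso dmap := hiso Y₁
    have hπd : coequalizer.π e₁ e₂ ≫ dmap = adj.counit.app Y₁ := coequalizer.π_desc _ _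
    refine ⟨CategoryTheory.inv dmap ≫ coequalizer.desc m₀ hcond, ?_, ?_⟩
    · have e : adj.counit.app Y₁ ≫ CategoryTheory.inv dmap ≫ coequalizer.desc m₀ hcond
          = m₀ := by
        calc adj.counit.app Y₁ ≫ CategoryTheory.inv dmap ≫ coequalizer.desc m₀ hcond
            = (coequalizer.π e₁ e₂ ≫ dmap)
              ≫ CategoryTheory.inv dmap ≫ coequalizer.desc m₀ hcond := by rw [hπd]
          _ = coequalizer.π e₁ e₂ ≫ coequalizer.desc m₀ hcond := by
              rw [Category.assoc, IsIso.hom_inv_id_assoc]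
          _ = m₀ := coequalizer.π_desc _ _
      have e2 := congrArg (fun t => adj.unit.app (G'.obj Y₁) ≫ G'.map t) e
      simp only [Functor.map_comp] at e2
      rw [adj.right_triangle_components_assoc] at e2
      rw [← Functor.map_comp] at e2
      show G'.map (CategoryTheory.inv dmap ≫ coequalizer.desc m₀ hcond) = h.f
      erw [e2, hm₀, Functor.map_comp, hh, adj.right_triangle_components_assoc]
    · intro h'' w
      replace w : G'.map h'' = h.f := w
      have e'' : adj.counit.app Y₁ ≫ h'' = m₀ := by
        erw [hm₀, ← w, adj.counit_naturality]
      have hd : dmap ≫ h'' = coequalizer.desc m₀ hcond := by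
        apply coequalizer.hom_ext
        rw [← Category.assoc, hπd, e'', coequalizer.π_desc]
      rw [← hd, IsIso.inv_hom_id_assoc]
  constructor
  case faithful =>
    refine ⟨fun {Y₁ Y₂} a b hab => ?_⟩
    have ha : G'.map a = ((Monad.comparison adj).map a).f := rfl
    have hb : G'.map b = ((Monad.comparison adj).map a).f := by rw [hab]; rfl
    exact (key ((Monad.comparison adj).map a)).unique ha hb
  case full =>
    refine ⟨fun {Y₁ Y₂} h => ⟨(key h).exists.choose,
      Monad.Algebra.Hom.ext (key h).exists.choose_spec⟩⟩
  case essSurj =>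
    refine ⟨fun X => ?_⟩
    haveI := hcoeq X
    set e₁ := adj.counit.app (F'.obj X.A) with he₁
    set e₂ : F'.obj (G'.obj (F'.obj X.A)) ⟶ F'.obj X.A := F'.map X.a with he₂
    -- the Beck split coequalizer in `C`
    have hspC : IsSplitCoequalizer (G'.map e₂) (G'.map e₁) X.a := Monad.beckSplitCoequalizer X
    obtain ⟨⟨W, ρ, ⟨hsp⟩⟩, -, ⟨hrefl⟩⟩ :=
      habs ((Monad.comparison adj).map e₂) ((Monad.comparison adj).map e₁)
        ⟨X.A, X.a, ⟨hspC⟩⟩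
    haveI := hrefl
    set t' := lift adj hsp.leftSection with ht'
    set q' := lift adj (ρ ≫ hsp.rightSection) with hq'
    have h1 : t' ≫ e₁ = 𝟙 (F'.obj X.A) := by
      apply kleisli_ext adj
      have := congrArg Monad.Algebra.Hom.f hsp.leftSection_bottom
      simp only [Monad.Algebra.comp_f, Monad.Algebra.id_f, Monad.comparison_map_f] at this
      rw [G'.map_comp, G'.map_id, ht', G'_map_lift]
      exact this
    have h2 : t' ≫ e₂ = q' := by
      apply kleisli_ext adj
      have := congrArg Monad.Algebra.Hom.f hsp.leftSection_top
      simp only [Monad.Algebra.comp_f, Monad.comparison_map_f] at this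
      rw [G'.map_comp, ht', hq', G'_map_lift, G'_map_lift, Monad.Algebra.comp_f]
      exact this
    have h3 : e₁ ≫ q' = e₂ ≫ q' := by
      apply kleisli_ext adj
      have := congrArg Monad.Algebra.Hom.f hsp.condition
      simp only [Monad.Algebra.comp_f, Monad.comparison_map_f] at this
      rw [G'.map_comp, G'.map_comp, hq', G'_map_lift, Monad.Algebra.comp_f]
      erw [← Category.assoc, ← Category.assoc, this]
      exact rfl
    set π := coequalizer.π e₁ e₂ with hπ
    set u := coequalizer.desc q' h3 with hu
    have h4 : q' ≫ π = π := by
      rw [← h2, Category.assoc, hπ, ← coequalizer.condition, ← Category.assoc, h1,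
        Category.id_comp]
    have h5 : u ≫ π = 𝟙 _ := by
      rw [← cancel_epi π, ← Category.assoc, hu, hπ, coequalizer.π_desc, Category.comp_id]
      exact h4
    have hD : IsSplitCoequalizer e₂ e₁ π :=
      { rightSection := u
        leftSection := t'
        condition := (coequalizer.condition e₁ e₂).symm
        rightSection_π := h5
        leftSection_bottom := h1
        leftSection_top := by rw [h2, hu, hπ, coequalizer.π_desc] }
    have colim2 : IsColimit (hD.map (Monad.comparison adj)).asCofork :=
      (hD.map (Monad.comparison adj)).isCoequalizer
    -- the cofork with point `X`
    set πX : (Monad.comparison adj).obj (F'.obj X.A) ⟶ X :=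
      { f := X.a, h := X.assoc.symm } with hπX
    have wcond : (Monad.comparison adj).map e₂ ≫ πX = (Monad.comparison adj).map e₁ ≫ πX :=
      Monad.Algebra.Hom.ext (by
        simp only [Monad.Algebra.comp_f, Monad.comparison_map_f, hπX]
        exact hspC.condition)
    have hspC' : IsSplitCoequalizer (adj.toMonad.forget.map ((Monad.comparison adj).map e₂))
        (adj.toMonad.forget.map ((Monad.comparison adj).map e₁))
        (adj.toMonad.forget.map πX) := hspC
    have hcf : IsColimit (Cofork.ofπ πX wcond) :=
      isColimitOfReflects adj.toMonad.forget
        ((isColimitMapCoconeCoforkEquiv adj.toMonad.forget wcond).symm hspC'.isCoequalizer)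
    exact ⟨_, ⟨(hcf.coconePointUniqueUpToIso colim2).symm⟩⟩
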